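/- Define W(x, ν) = νᵀ(ρ_U(x + ν) - ρ_U(x)) + ‖ρ_U(x + ν)‖² for x, ν ∈ ℝᴺ with componentwise saturation ρ_U. Then W(x, ν) ≥ 0 for all x, ν, and W(x, ν) = 0 if and only if x = 0 and ν = 0. -/

import Mathlib

open RealInnerProductSpace

noncomputable def sat (U η : ℝ) : ℝ := Real.sign η * min |η| U

noncomputable def satVec (U : ℝ) {N : ℕ} (x : EuclideanSpace ℝ (Fin N)) :
    EuclideanSpace ℝ (Fin N) := WithLp.toLp 2 (fun i => sat U (x i))

noncomputable def W2 (U : ℝ) {N : ℕ} (x ν : EuclideanSpace ℝ (Fin N)) : ℝ :=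
  ⟪ν, satVec U (x + ν) - satVec U x⟫ + ‖satVec U (x + ν)‖ ^ 2

lemma sat_eq_clamp (U : ℝ) (hU : 0 < U) (η : ℝ) : sat U η = max (-U) (min U η) := by
  rcases lt_trichotomy η 0 with h | h | h
  · rw [sat, Real.sign_of_neg h, abs_of_neg h]
    rcases le_total (-U) η with h2 | h2
    · rw [min_eq_left (by linarith : -η ≤ U), min_eq_right (by linarith : η ≤ U), max_eq_right h2]; ring
    · rw [min_eq_right (by linarith : U ≤ -η), min_eq_right (by linarith : η ≤ U), max_eq_left h2]; ring
  · simp [sat, h, le_of_lt hU]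
  · rw [sat, Real.sign_of_pos h, abs_of_pos h, one_mul]
    rcases le_total U η with h2 | h2
    · rw [min_eq_right h2, min_eq_left h2, max_eq_right (by linarith)]
    · rw [min_eq_left h2, min_eq_right h2, max_eq_right (by linarith)]

lemma sat_eq_zero_iff (U : ℝ) (hU : 0 < U) (η : ℝ) : sat U η = 0 ↔ η = 0 := by
  rw [sat_eq_clamp U hU]
  constructor
  · intro h
    rcases le_total U η with h2 | h2 <;> rcases le_total η (-U) with h3 | h3 <;>
      rw [min_def, max_def] at h <;> split_ifs at h <;> linarith
  · intro h; simp [h, le_of_lt hU]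

lemma key_nonneg (U : ℝ) (hU : 0 < U) (a b : ℝ) :
    (sat U (a + b) - sat U a)^2 ≤ b * (sat U (a + b) - sat U a) := by
  rw [sat_eq_clamp U hU, sat_eq_clamp U hU]
  rcases le_total U (a+b) with h1 | h1 <;> rcases le_total (a+b) (-U) with h2 | h2 <;>
  rcases le_total U a with h3 | h3 <;> rcases le_total a (-U) with h4 | h4 <;>
    simp [min_def, max_def, h1, h2, h3, h4] <;>
    first
    | nlinarith
    | (split_ifs <;> nlinarith)

lemma scalar_w_nonneg (U : ℝ) (hU : 0 < U) (a b : ℝ) :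
    0 ≤ b * (sat U (a + b) - sat U a) + (sat U (a + b))^2 := by
  nlinarith [key_nonneg U hU a b, sq_nonneg (sat U (a+b) - sat U a), sq_nonneg (sat U (a+b))]

lemma scalar_w_zero (U : ℝ) (hU : 0 < U) (a b : ℝ)
    (h : b * (sat U (a + b) - sat U a) + (sat U (a + b))^2 = 0) : a = 0 ∧ b = 0 := by
  have hk := key_nonneg U hU a b
  have h1 : sat U (a+b) = 0 := by nlinarith [sq_nonneg (sat U (a+b) - sat U a)]
  have h2 : sat U (a+b) - sat U a = 0 := by nlinarith [sq_nonneg (sat U (a+b) - sat U a)]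
  have ha : a = 0 := (sat_eq_zero_iff U hU a).mp (by linarith)
  have hab : a + b = 0 := (sat_eq_zero_iff U hU (a+b)).mp h1
  exact ⟨ha, by linarith⟩

theorem W2_posdef (U : ℝ) (hU : 0 < U) (N : ℕ) (x ν : EuclideanSpace ℝ (Fin N)) :
    0 ≤ W2 U x ν ∧ (W2 U x ν = 0 ↔ x = 0 ∧ ν = 0) := by
  have hsum : W2 U x ν = ∑ i, (ν i * (sat U (x i + ν i) - sat U (x i)) + (sat U (x i + ν i))^2) := by
    rw [W2, ← real_inner_self_eq_norm_sq]
    simp only [PiLp.inner_apply, RCLike.inner_apply, conj_trivial]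
    rw [← Finset.sum_add_distrib]
    congr 1; ext i
    simp [satVec, sq]
    ring
  have hterm : ∀ i : Fin N, 0 ≤ ν i * (sat U (x i + ν i) - sat U (x i)) + (sat U (x i + ν i))^2 :=
    fun i => scalar_w_nonneg U hU (x i) (ν i)
  constructor
  · rw [hsum]; exact Finset.sum_nonneg fun i _ => hterm i
  constructor
  · intro h
    rw [hsum] at h
    have := (Finset.sum_eq_zero_iff_of_nonneg (fun i _ => hterm i)).mp h
    have hz : ∀ i, x i = 0 ∧ ν i = 0 := fun i =>
      scalar_w_zero U hU (x i) (ν i) (this i (Finset.mem_univ i))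
    exact ⟨PiLp.ext fun i => by simp [(hz i).1], PiLp.ext fun i => by simp [(hz i).2]⟩
  · rintro ⟨hx, hv⟩
    subst hx; subst hv
    rw [hsum]
    apply Finset.sum_eq_zero
    intro i _
    have : sat U 0 = 0 := (sat_eq_zero_iff U hU 0).mpr rfl
    simp only [PiLp.zero_apply, add_zero, zero_mul, this, zero_add]
    norm_num
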